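/- Let N be a positive integer, β, γ > 0, R₀ = β/γ. Define τ₀ = 0 and, for 1 ≤ i ≤ N, τ_i = (1/γ) Σ_{m=1}^{i} Σ_{j=m}^{N} (1/j) (R₀/N)^{j−m} (N−m)!/(N−j)!. Then for every i with 1 ≤ i ≤ N, (β/N) i (N − i)(τ_{i+1} − τ_i) + γ i (τ_{i−1} − τ_i) = −1, where for i = N the first term is zero (so the value of τ_{N+1} is irrelevant, e.g. take τ_{N+1} = τ_N). -/

import Mathlib

noncomputable def Snd (N : ℕ) (r : ℝ) (m : ℕ) : ℝ :=
  ∑ j ∈ Finset.Icc m N, (1 / (j : ℝ)) * r ^ (j - m) *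
    ((N - m).factorial : ℝ) / ((N - j).factorial : ℝ)

lemma Snd_rec (N : ℕ) (r : ℝ) (i : ℕ) (h1 : 1 ≤ i) (h2 : i ≤ N) :
    Snd N r i = 1 / i + r * ((N - i : ℕ) : ℝ) * Snd N r (i + 1) := by
  unfold Snd
  have hins : Finset.Icc i N = insert i (Finset.Icc (i + 1) N) := by
    rw [Finset.Icc_add_one_left_eq_Ioc]
    exact (Finset.Ioc_insert_left h2).symm
  rw [hins, Finset.sum_insert (by simp), Finset.mul_sum]
  congr 1
  · have : ((N - i).factorial : ℝ) ≠ 0 := by positivity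
    field_simp
    simp
  · apply Finset.sum_congr rfl
    intro j hj
    simp only [Finset.mem_Icc] at hj
    have h3 : j - i = (j - (i + 1)) + 1 := by omega
    have h4 : N - i = (N - (i + 1)) + 1 := by omega
    rw [h3, h4, pow_succ, Nat.factorial_succ]
    push_cast
    ring

/-- Norden's explicit formula for the mean extinction time of the classic SIS
model satisfies the defining linear system `Q_C τ = -1`: with
`τ_i = (1/γ) Σ_{m=1}^i Σ_{j=m}^N (1/j)(R₀/N)^{j-m} (N-m)!/(N-j)!`, `τ₀ = 0`
and `τ_{N+1} = τ_N`, we have for `1 ≤ i ≤ N`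
`(β/N) i (N-i)(τ_{i+1} - τ_i) + γ i (τ_{i-1} - τ_i) = -1`
(for `i = N` the first term vanishes since `N - i = 0`). -/
theorem sis_norden_formula_solves_system
    (N : ℕ) (hN : 0 < N) (β γ : ℝ) (hβ : 0 < β) (hγ : 0 < γ)
    (τ : ℕ → ℝ) (hτ0 : τ 0 = 0)
    (hτ : ∀ i : ℕ, 1 ≤ i → i ≤ N →
      τ i = (1 / γ) * ∑ m ∈ Finset.Icc 1 i, ∑ j ∈ Finset.Icc m N,
        (1 / (j : ℝ)) * ((β / γ) / N) ^ (j - m) *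
          ((N - m).factorial : ℝ) / ((N - j).factorial : ℝ))
    (hτN : τ (N + 1) = τ N) :
    ∀ i : ℕ, 1 ≤ i → i ≤ N →
      (β / N) * i * ((N : ℝ) - i) * (τ (i + 1) - τ i) +
        γ * i * (τ (i - 1) - τ i) = -1 := by
  set r : ℝ := (β / γ) / N with hr
  have hτ' : ∀ k : ℕ, 1 ≤ k → k ≤ N →
      τ k = (1 / γ) * ∑ m ∈ Finset.Icc 1 k, Snd N r m := by
    intro k hk1 hk2
    rw [hτ k hk1 hk2]
    rfl
  intro i h1 h2
  have hγ' : γ ≠ 0 := ne_of_gt hγ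
  have hi0 : (i : ℝ) ≠ 0 := Nat.cast_ne_zero.mpr (by omega)
  have hN0 : (N : ℝ) ≠ 0 := Nat.cast_ne_zero.mpr (by omega)
  -- step down
  have hA : τ i - τ (i - 1) = (1 / γ) * Snd N r i := by
    obtain ⟨k, rfl⟩ : ∃ k, i = k + 1 := ⟨i - 1, by omega⟩
    simp only [Nat.add_sub_cancel]
    rcases Nat.eq_zero_or_pos k with hk | hk
    · subst hk
      rw [hτ0, hτ' 1 le_rfl (by omega)]
      simp
    · rw [hτ' (k + 1) (by omega) h2, hτ' k hk (by omega),
        Finset.sum_Icc_succ_top (by omega : 1 ≤ k + 1)]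
      ring
  -- step up
  have hB : (β / N) * i * ((N : ℝ) - i) * (τ (i + 1) - τ i) =
      (β / N) * i * ((N : ℝ) - i) * ((1 / γ) * Snd N r (i + 1)) := by
    rcases eq_or_lt_of_le h2 with h | h
    · subst h
      rw [hτN]
      simp
    · rw [hτ' (i + 1) (by omega) (by omega), hτ' i h1 h2,
        Finset.sum_Icc_succ_top (by omega : 1 ≤ i + 1)]
      ring_nf
  have hcast : ((N - i : ℕ) : ℝ) = (N : ℝ) - i := Nat.cast_sub h2
  have hrec := Snd_rec N r i h1 h2
  rw [hcast] at hrec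
  have : τ (i - 1) - τ i = -((1 / γ) * Snd N r i) := by linarith [hA]
  rw [hB, this, hrec, hr]
  field_simp
  ring
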